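/- If X is a nonempty finite partial groupoid (X_1 nonempty and finite), then X is p(X)-skeletal. -/
import Mathlib


/-- A symmetric (simplicial) set: a functor `Υᵒᵖ → Set`, where `Υ` has objects
`[n] = {0,…,n}` (encoded as `Fin (n+1)`) and all functions as morphisms.
For `α : [m] → [n]` and `x ∈ X_n`, `act α x` is `x · α ∈ X_m`. -/
structure SymSet where
  obj : ℕ → Type
  act : ∀ {m n : ℕ}, (Fin (m + 1) → Fin (n + 1)) → obj n → obj m
  act_id : ∀ {n : ℕ} (x : obj n), act id x = x
  act_comp : ∀ {m n k : ℕ} (α : Fin (m + 1) → Fin (n + 1)) (β : Fin (n + 1) → Fin (k + 1))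
      (x : obj k), act α (act β x) = act (β ∘ α) x

namespace SymSet

/-- `x_{ij} ∈ X_1`, the action on `x ∈ X_n` of the map `[1] → [n]` with `0 ↦ i`, `1 ↦ j`. -/
def edge (X : SymSet) {n : ℕ} (i j : Fin (n + 1)) (x : X.obj n) : X.obj 1 :=
  X.act (fun t : Fin 2 => if t = 0 then i else j) x

/-- The domain of an edge, its image under `ι₀ : [0] → [1]`, `0 ↦ 0`. -/
def edgeDom (X : SymSet) (f : X.obj 1) : X.obj 0 :=
  X.act (fun _ : Fin 1 => (0 : Fin 2)) f

/-- The codomain of an edge, its image under `ι₁ : [0] → [1]`, `0 ↦ 1`. -/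
def edgeCod (X : SymSet) (f : X.obj 1) : X.obj 0 :=
  X.act (fun _ : Fin 1 => (1 : Fin 2)) f

/-- The identity edge `id_a` on an object `a ∈ X_0`, induced by the unique map `[1] → [0]`. -/
def identityEdge (X : SymSet) (a : X.obj 0) : X.obj 1 :=
  X.act (fun _ : Fin 2 => (0 : Fin 1)) a

/-- An edge is an identity if it is in the image of `X_0 → X_1`. -/
def IsIdentityEdge (X : SymSet) (f : X.obj 1) : Prop :=
  ∃ a : X.obj 0, f = X.identityEdge a

/-- The tuple of edges `x_{ij}` (for `i < j` an edge `{i,j}` of the spine `T`)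
associated to an `n`-simplex `x`. -/
def spineTuple (X : SymSet) {n : ℕ} (T : SimpleGraph (Fin (n + 1))) (x : X.obj n) :
    ∀ i j : Fin (n + 1), i < j → T.Adj i j → X.obj 1 :=
  fun i j _ _ => X.edge i j x

/-- Membership in `lim_T X`: the components have matching endpoints. -/
def IsSpineLim (X : SymSet) {n : ℕ} (T : SimpleGraph (Fin (n + 1)))
    (e : ∀ i j : Fin (n + 1), i < j → T.Adj i j → X.obj 1) : Prop :=
  ∃ v : Fin (n + 1) → X.obj 0, ∀ (i j : Fin (n + 1)) (hlt : i < j) (h : T.Adj i j),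
    X.edgeDom (e i j hlt h) = v i ∧ X.edgeCod (e i j hlt h) = v j

/-- The limit `lim_T X` of the diagram associated to a spine `T`. -/
def SpineLim (X : SymSet) {n : ℕ} (T : SimpleGraph (Fin (n + 1))) : Type :=
  { e : ∀ i j : Fin (n + 1), i < j → T.Adj i j → X.obj 1 // X.IsSpineLim T e }

lemma spineTuple_isSpineLim (X : SymSet) {n : ℕ} (T : SimpleGraph (Fin (n + 1)))
    (x : X.obj n) : X.IsSpineLim T (X.spineTuple T x) := by
  refine ⟨fun i => X.act (fun _ : Fin 1 => i) x, fun i j hlt h => ⟨?_, ?_⟩⟩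
  · show X.act _ (X.act _ x) = _
    rw [X.act_comp]
    show X.act ((fun t : Fin 2 => if t = 0 then i else j) ∘ fun _ : Fin 1 => 0) x
      = X.act (fun _ : Fin 1 => i) x
    congr 1
  · show X.act _ (X.act _ x) = _
    rw [X.act_comp]
    show X.act ((fun t : Fin 2 => if t = 0 then i else j) ∘ fun _ : Fin 1 => 1) x
      = X.act (fun _ : Fin 1 => j) x
    congr 1

/-- The map `𝓔_T : X_n → lim_T X`. -/
def spineMap (X : SymSet) {n : ℕ} (T : SimpleGraph (Fin (n + 1))) (x : X.obj n) :
    X.SpineLim T :=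
  ⟨X.spineTuple T x, X.spineTuple_isSpineLim T x⟩

/-- A symmetric set is *spiny* if `𝓔_T` is injective for every `n ≥ 1` and
every spine `T` of `[n]` (a tree with vertex set `[n]`). -/
def Spiny (X : SymSet) : Prop :=
  ∀ n : ℕ, 1 ≤ n → ∀ T : SimpleGraph (Fin (n + 1)), T.IsTree →
    Function.Injective (X.spineMap T)

/-- An element `x ∈ X_n` is degenerate if `x = y · σ` for some noninvertible
surjection `σ : [n] → [k]`. -/
def Degenerate (X : SymSet) {n : ℕ} (x : X.obj n) : Prop :=
  ∃ (k : ℕ) (σ : Fin (n + 1) → Fin (k + 1)) (y : X.obj k),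
    Function.Surjective σ ∧ ¬ Function.Bijective σ ∧ x = X.act σ y

/-- A symmetric subset (subfunctor) of `X`. -/
structure SymSubset (X : SymSet) where
  carrier : ∀ n : ℕ, Set (X.obj n)
  act_mem : ∀ {m n : ℕ} (α : Fin (m + 1) → Fin (n + 1)) {x : X.obj n},
    x ∈ carrier n → X.act α x ∈ carrier m

/-- `X` is `n`-skeletal: the smallest symmetric subset of `X` containing all
of its `n`-simplices is all of `X`. -/
def IsSkeletal (X : SymSet) (n : ℕ) : Prop :=
  ∀ Y : SymSubset X, (∀ x : X.obj n, x ∈ Y.carrier n) →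
    ∀ (m : ℕ) (x : X.obj m), x ∈ Y.carrier m

/-- `X` has dimension `n`: it is `n`-skeletal but not `k`-skeletal for `k < n`
(for `n ≥ 1` this is equivalent to not being `(n-1)`-skeletal). -/
def HasDim (X : SymSet) (n : ℕ) : Prop :=
  X.IsSkeletal n ∧ ∀ k : ℕ, k < n → ¬ X.IsSkeletal k

/-- Two objects are related if there is an edge between them (in either direction). -/
def EdgeRel (X : SymSet) (a b : X.obj 0) : Prop :=
  ∃ f : X.obj 1, (X.edgeDom f = a ∧ X.edgeCod f = b) ∨ (X.edgeDom f = b ∧ X.edgeCod f = a)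

/-- `X` is connected: it is nonempty and any two objects are joined by a
zig-zag of edges. -/
def Connected (X : SymSet) : Prop :=
  Nonempty (X.obj 0) ∧ ∀ a b : X.obj 0, Relation.ReflTransGen X.EdgeRel a b

/-- `n_a`: the number of nonidentity edges with domain `a`. -/
noncomputable def nEdges (X : SymSet) (a : X.obj 0) : ℕ :=
  Nat.card { f : X.obj 1 // X.edgeDom f = a ∧ ¬ X.IsIdentityEdge f }

/-- `p(X)`: the maximum of the `n_a` over all objects `a`. -/
noncomputable def pVal (X : SymSet) : ℕ := ⨆ a : X.obj 0, X.nEdges a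

/-- A map of symmetric sets (a natural transformation). -/
structure SymMap (X Y : SymSet) where
  app : ∀ n : ℕ, X.obj n → Y.obj n
  naturality : ∀ {m n : ℕ} (α : Fin (m + 1) → Fin (n + 1)) (x : X.obj n),
    app m (X.act α x) = Y.act α (app n x)

/-- A map of symmetric sets is an isomorphism iff it is levelwise bijective. -/
def SymMap.IsIso {X Y : SymSet} (F : SymMap X Y) : Prop :=
  ∀ n : ℕ, Function.Bijective (F.app n)

/-- `X` and `Y` are isomorphic symmetric sets. -/
def Isomorphic (X Y : SymSet) : Prop := ∃ F : SymMap X Y, F.IsIso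

/-- The Bousfield–Segal map `𝓑_m : X_m → X_1^m`, `x ↦ (x_{01}, x_{02}, …, x_{0m})`. -/
def bousfield (X : SymSet) {m : ℕ} (x : X.obj m) : Fin m → X.obj 1 :=
  fun i => X.edge 0 i.succ x

/-- `X` is spiny in degrees below `q`: `𝓔_T` is injective for every spine `T`
of `[n]` for each `1 ≤ n ≤ q`. -/
def SpinyBelow (X : SymSet) (q : ℕ) : Prop :=
  ∀ n : ℕ, 1 ≤ n → n ≤ q → ∀ T : SimpleGraph (Fin (n + 1)), T.IsTree →
    Function.Injective (X.spineMap T)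

/-- `X` is a groupoid: `𝓔_T : X_n → lim_T X` is a bijection for every `n ≥ 1`
and every spine `T` of `[n]`. -/
def IsGroupoid (X : SymSet) : Prop :=
  ∀ n : ℕ, 1 ≤ n → ∀ T : SimpleGraph (Fin (n + 1)), T.IsTree →
    Function.Bijective (X.spineMap T)

/-- `X` is reduced: `X_0` is a singleton. -/
def Reduced (X : SymSet) : Prop := Nonempty (X.obj 0) ∧ Subsingleton (X.obj 0)

/-- A partial group is a reduced spiny symmetric set. -/
def IsPartialGroup (X : SymSet) : Prop := X.Reduced ∧ X.Spiny

/-- The levelwise product of two symmetric sets. -/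
def prod (X Y : SymSet) : SymSet where
  obj n := X.obj n × Y.obj n
  act α p := (X.act α p.1, Y.act α p.2)
  act_id p := by cases p with | mk a b => simp only [X.act_id, Y.act_id]
  act_comp α β p := by cases p with | mk a b => simp only [X.act_comp, Y.act_comp]


end SymSet

def starG (m : ℕ) : SimpleGraph (Fin (m+1)) := SimpleGraph.fromRel (fun a _ => a = 0)

lemma starG_adj {m : ℕ} {a b : Fin (m+1)} : (starG m).Adj a b ↔ a ≠ b ∧ (a = 0 ∨ b = 0) :=
  SimpleGraph.fromRel_adj _ a b

lemma starG_connected (m : ℕ) : (starG m).Connected := by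
  rw [SimpleGraph.connected_iff]
  refine ⟨fun a b => ?_, ⟨0⟩⟩
  have h : ∀ c : Fin (m+1), (starG m).Reachable 0 c := by
    intro c
    by_cases hc : c = 0
    · subst hc; exact SimpleGraph.Reachable.refl 0
    · exact (SimpleGraph.Adj.reachable (starG_adj.mpr ⟨Ne.symm hc, Or.inl rfl⟩))
  exact ((h a).symm.trans (h b))

lemma starG_acyclic (m : ℕ) : (starG m).IsAcyclic := by
  intro v c hc
  have h3 := hc.three_le_length
  have hnd := hc.support_nodup
  cases c with
  | nil => simp at h3
  | cons h1 p =>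
    rename_i b
    cases p with
    | nil => simp at h3
    | cons h2 q =>
      rename_i c2
      by_cases hv : v = 0
      · -- v = 0, b ≠ 0, so c2 = 0
        subst hv
        have hb : b ≠ 0 := fun h => ((starG_adj.mp h1).1 (h ▸ rfl)).elim
        have hc2 : c2 = 0 := ((starG_adj.mp h2).2).resolve_left hb
        subst hc2
        cases q with
        | nil => simp at h3
        | cons h4 r =>
          simp only [SimpleGraph.Walk.support_cons, List.tail_cons, List.nodup_cons] at hnd
          exact hnd.2.1 (SimpleGraph.Walk.end_mem_support r)
      · have hb : b = 0 := ((starG_adj.mp h1).2).resolve_left hv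
        subst hb
        have hc2 : c2 ≠ 0 := fun h => ((starG_adj.mp h2).1 (h ▸ rfl)).elim
        cases q with
        | nil => simp at h3
        | cons h4 r =>
          rename_i c4
          have hc4 : c4 = 0 := ((starG_adj.mp h4).2).resolve_left hc2
          subst hc4
          simp only [SimpleGraph.Walk.support_cons, List.tail_cons, List.nodup_cons] at hnd
          exact hnd.1 (List.mem_cons_of_mem _ (SimpleGraph.Walk.start_mem_support r))

lemma starG_isTree (m : ℕ) : (starG m).IsTree := ⟨starG_connected m, starG_acyclic m⟩

namespace SymSet

lemma edge_act (X : SymSet) {m n : ℕ} (σ : Fin (m+1) → Fin (n+1)) (i j : Fin (m+1))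
    (x : X.obj n) : X.edge i j (X.act σ x) = X.edge (σ i) (σ j) x := by
  unfold edge
  rw [X.act_comp]
  congr 1
  funext t
  by_cases h : t = 0 <;> simp [h]

lemma edgeDom_edge (X : SymSet) {n : ℕ} (i j : Fin (n+1)) (x : X.obj n) :
    X.edgeDom (X.edge i j x) = X.act (fun _ : Fin 1 => i) x := by
  unfold edgeDom edge
  rw [X.act_comp]
  congr 1

lemma identityEdge_act (X : SymSet) {n : ℕ} (i : Fin (n+1)) (x : X.obj n) :
    X.identityEdge (X.act (fun _ : Fin 1 => i) x) = X.edge i i x := by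
  unfold identityEdge edge
  rw [X.act_comp]
  congr 1
  funext t
  by_cases h : t = 0 <;> simp [h]

lemma edgeDom_identityEdge (X : SymSet) (a : X.obj 0) : X.edgeDom (X.identityEdge a) = a := by
  unfold edgeDom identityEdge
  rw [X.act_comp]
  have : ((fun _ : Fin 2 => (0 : Fin 1)) ∘ fun _ : Fin 1 => (0 : Fin 2)) = id := by
    funext t
    exact Subsingleton.elim _ _
  rw [this, X.act_id]

/-- Collapsing lemma: in a spiny symmetric set, if `x_{0i} = x_{0j}` with `j ≠ 0`, `i ≠ j`,
then `x` is fixed by the map sending `j` to `i`. -/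
lemma collapse (X : SymSet) (hX : X.Spiny) {m : ℕ} (hm : 1 ≤ m) (x : X.obj m)
    (i j : Fin (m+1)) (hj : j ≠ 0) (hij : i ≠ j)
    (he : X.edge 0 i x = X.edge 0 j x) :
    x = X.act (fun k => if k = j then i else k) x := by
  apply hX m hm (starG m) (starG_isTree m)
  apply Subtype.ext
  funext a b hlt hadj
  show X.edge a b x = X.edge a b (X.act _ x)
  rw [X.edge_act]
  obtain ⟨hab, h0⟩ := starG_adj.mp hadj
  have ha : a = 0 := by
    rcases h0 with h | h
    · exact h
    · exact absurd hlt (by simp [h, Fin.lt_def])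
  subst ha
  have h00 : (if (0 : Fin (m+1)) = j then i else 0) = 0 := if_neg (Ne.symm hj)
  rw [h00]
  by_cases hb : b = j
  · rw [if_pos hb, hb, he]
  · rw [if_neg hb]

end SymSet

/-- a nonempty finite partial groupoid (`X_1` nonempty and finite)
is `p(X)`-skeletal. -/
theorem stmt7 (X : SymSet) (hX : X.Spiny) (h1 : Nonempty (X.obj 1)) (h2 : Finite (X.obj 1)) :
    X.IsSkeletal X.pVal := by
  intro Y hY m
  induction m using Nat.strong_induction_on with
  | _ m IH =>
  intro x
  by_cases hmp : m ≤ X.pVal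
  · -- low degrees: x is a face of a pVal-simplex
    set p := X.pVal with hp
    have hδσ : x = X.act (Fin.castLE (by omega : m + 1 ≤ p + 1))
        (X.act (fun k : Fin (p+1) => (⟨min k m, by omega⟩ : Fin (m+1))) x) := by
      rw [X.act_comp]
      have : ((fun k : Fin (p+1) => (⟨min k m, by omega⟩ : Fin (m+1))) ∘
          Fin.castLE (by omega : m + 1 ≤ p + 1)) = id := by
        funext k
        apply Fin.ext
        simp only [Function.comp_apply, Fin.castLE, id_eq]
        omega
      rw [this, X.act_id]
    rw [hδσ]
    exact Y.act_mem _ (hY _)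
  · -- high degrees: x is degenerate
    push_neg at hmp
    have hm1 : 1 ≤ m := by omega
    -- find a repeated edge
    have key : ∃ i j : Fin (m+1), j ≠ 0 ∧ i ≠ j ∧ X.edge 0 i x = X.edge 0 j x := by
      by_contra hc
      push_neg at hc
      set a := X.act (fun _ : Fin 1 => (0 : Fin (m+1))) x with ha
      have hF : ∀ i : Fin m, X.edgeDom (X.edge 0 i.succ x) = a ∧
          ¬ X.IsIdentityEdge (X.edge 0 i.succ x) := by
        intro i
        constructor
        · rw [X.edgeDom_edge]
        · rintro ⟨b, hb⟩
          have hba : b = a := by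
            have := congrArg X.edgeDom hb
            rw [X.edgeDom_edge, X.edgeDom_identityEdge] at this
            exact this.symm
          subst hba
          have h00 : X.edge 0 i.succ x = X.edge 0 0 x := by
            rw [hb, ha, X.identityEdge_act]
          exact hc 0 i.succ (Fin.succ_ne_zero i) (Fin.succ_ne_zero i).symm h00.symm
      set F : Fin m → {f : X.obj 1 // X.edgeDom f = a ∧ ¬ X.IsIdentityEdge f} :=
        fun i => ⟨X.edge 0 i.succ x, hF i⟩ with hFdef
      have hFinj : Function.Injective F := by
        intro i₁ i₂ h
        have h' : X.edge 0 i₁.succ x = X.edge 0 i₂.succ x := congrArg Subtype.val h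
        by_contra hne
        exact hc i₁.succ i₂.succ (Fin.succ_ne_zero i₂)
          (fun hs => hne (Fin.succ_injective m hs)) h'
      have hcard : m ≤ X.nEdges a := by
        have := Nat.card_le_card_of_injective F hFinj
        simpa [SymSet.nEdges] using this
      have hbdd : X.nEdges a ≤ X.pVal := by
        apply le_ciSup (f := X.nEdges)
        refine ⟨Nat.card (X.obj 1), ?_⟩
        rintro _ ⟨b, rfl⟩
        exact Nat.card_le_card_of_injective Subtype.val Subtype.val_injective
      omega
    obtain ⟨i, j, hj, hij, he⟩ := key
    have hσ := X.collapse hX hm1 x i j hj hij he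
    set σ : Fin (m+1) → Fin (m+1) := fun k => if k = j then i else k with hσdef
    have hσne : ∀ k, σ k ≠ j := by
      intro k
      by_cases h : k = j <;> simp [hσdef, h, hij]
    obtain ⟨n, rfl⟩ : ∃ n, m = n + 1 := ⟨m - 1, by omega⟩
    have hex : ∀ k, ∃ l : Fin (n+1), j.succAbove l = σ k := by
      intro k
      exact Fin.exists_succAbove_eq (hσne k)
    have hcomp : (j.succAbove ∘ fun k => (hex k).choose) = σ := by
      funext k
      exact (hex k).choose_spec
    have hx : x = X.act (fun k => (hex k).choose) (X.act j.succAbove x) := by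
      rw [X.act_comp, hcomp, ← hσ]
    rw [hx]
    exact Y.act_mem _ (IH n (by omega) _)
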